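/- Let L be a free ℤ-module of rank 2 equipped with a symmetric bilinear form B : L × L → ℤ, and let σ : L → L be a ℤ-linear automorphism with σ³ = id, whose only fixed point is 0, and which is an isometry of B (B(σx, σy) = B(x, y) for all x, y). Then there exist a ℤ-basis (v, w) of L and an integer m such that B(v,v) = 2m, B(w,w) = 2m and B(v,w) = −m; that is, the Gram matrix of B in this basis is m times the Gram matrix [[2,−1],[−1,2]] of the root lattice A₂. -/

import Mathlib

/-- A binary quadratic form of discriminant `-3` represents `1` or `-1`. -/
lemma disc_neg_three_represents (n : ℕ) : ∀ A B C : ℤ, A.natAbs = n → B^2 - 4*A*C = -3 →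
    ∃ x y : ℤ, A*x^2 + B*x*y + C*y^2 = 1 ∨ A*x^2 + B*x*y + C*y^2 = -1 := by
  induction n using Nat.strong_induction_on with
  | _ n ih =>
    intro A B C hn hd
    have hA0 : A ≠ 0 := by rintro rfl; nlinarith [sq_nonneg B]
    by_cases h1 : A.natAbs = 1
    · rcases Int.natAbs_eq_iff.mp h1 with h | h
      · exact ⟨1, 0, Or.inl (by rw [h]; ring)⟩
      · exact ⟨1, 0, Or.inr (by rw [h]; ring)⟩
    · set a : ℤ := (A.natAbs : ℤ) with ha
      have ha2 : 2 ≤ a := by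
        have h0 : A.natAbs ≠ 0 := fun h => hA0 (Int.natAbs_eq_zero.mp h)
        omega
      set r := B % (2*a) with hrdef
      have hr0 : 0 ≤ r := Int.emod_nonneg B (by positivity)
      have hr1 : r < 2*a := Int.emod_lt_of_pos B (by positivity)
      have hrB : r = B - 2*a*(B/(2*a)) := Int.emod_def B (2*a)
      have hdvd : 2*a ∣ B - r := ⟨B/(2*a), by rw [hrB]; ring⟩
      set k : ℤ := if r ≤ a then r else r - 2*a with hkdef
      have hk_ub : k ≤ a := by by_cases h : r ≤ a <;> simp [hkdef, h] <;> omega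
      have hk_lb : -a ≤ k := by by_cases h : r ≤ a <;> simp [hkdef, h] <;> omega
      have hk_dvd : 2*a ∣ B - k := by
        by_cases h : r ≤ a
        · simpa [hkdef, h] using hdvd
        · simp only [hkdef, if_neg h]
          have : B - (r - 2*a) = (B - r) + 2*a*1 := by ring
          rw [this]
          exact dvd_add hdvd ⟨1, rfl⟩
      have hAdvd : 2*A ∣ B - k := by
        rcases Int.natAbs_eq A with h | h
        · rw [← ha] at h; rw [h]; exact hk_dvd
        · rw [← ha] at h; rw [h]
          have : 2 * -a = -(2*a) := by ring
          rw [this, neg_dvd]; exact hk_dvd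
      obtain ⟨x, hx⟩ := hAdvd
      set x0 : ℤ := -x with hx0
      have hk : 2*A*x0 + B = k := by rw [hx0]; linarith [hx]
      set A2 : ℤ := A*x0^2 + B*x0 + C with hA2
      have key : 4*A*A2 = k^2 + 3 := by
        have h2 : (2*A*x0+B)^2 - (B^2 - 4*A*C) = 4*A*(A*x0^2+B*x0+C) := by ring
        rw [hk, hd] at h2
        rw [hA2]; linarith
      have habs : 4*a*|A2| = k^2 + 3 := by
        have h3 : |4*A*A2| = 4*a*|A2| := by
          rw [abs_mul, abs_mul, ha, ← Int.abs_eq_natAbs]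
          norm_num
        rw [← h3, key, abs_of_nonneg (by positivity)]
      have hk2 : k^2 ≤ a^2 := by nlinarith
      have hA2lt : |A2| < a := by nlinarith [habs]
      have hA2ne : A2 ≠ 0 := by
        intro h; rw [h] at habs; simp at habs; nlinarith [sq_nonneg k]
      have hlt : A2.natAbs < n := by
        rw [Int.abs_eq_natAbs, ha] at hA2lt
        rw [← hn]; exact_mod_cast hA2lt
      obtain ⟨s, t, hst⟩ := ih A2.natAbs hlt A2 (-k) A rfl (by linear_combination -key)
      refine ⟨x0*s - t, s, ?_⟩
      have htrans : A*(x0*s-t)^2 + B*(x0*s-t)*s + C*s^2 = A2*s^2 + (-k)*s*t + A*t^2 := by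
        linear_combination (-(s*t))*hk + s^2*hA2.symm
      rw [htrans]
      exact hst

/-- Classification of rank-2 ℰ-lattices: if `L` is a free ℤ-module of rank 2 with a
symmetric bilinear form `B`, and `σ` is a fixed-point-free ℤ-linear automorphism of
order 3 which is an isometry of `B`, then there is a ℤ-basis `(v, w)` of `L` and an
integer `m` with `B(v,v) = 2m`, `B(w,w) = 2m`, `B(v,w) = −m`; i.e. the Gram matrix is
`m` times that of the root lattice `A₂`. -/
theorem rank_two_E_lattice_is_A2_up_to_scaling
    (L : Type*) [AddCommGroup L] [Module ℤ L]
    [Module.Free ℤ L] [Module.Finite ℤ L]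
    (hrk : Module.finrank ℤ L = 2)
    (B : L →ₗ[ℤ] L →ₗ[ℤ] ℤ)
    (hsymm : ∀ x y : L, B x y = B y x)
    (σ : L ≃ₗ[ℤ] L) (h3 : σ ^ 3 = 1)
    (hfix : ∀ x : L, σ x = x → x = 0)
    (hisom : ∀ x y : L, B (σ x) (σ y) = B x y) :
    ∃ (b : Module.Basis (Fin 2) ℤ L) (m : ℤ),
      B (b 0) (b 0) = 2 * m ∧ B (b 1) (b 1) = 2 * m ∧ B (b 0) (b 1) = -m := by

  have hσ3 : ∀ x : L, σ (σ (σ x)) = x := by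
    intro x
    have := congrArg (fun f : L ≃ₗ[ℤ] L => f x) h3
    simpa [pow_succ] using this
  have hsum : ∀ x : L, σ (σ x) + σ x + x = 0 := by
    intro x
    apply hfix
    rw [map_add, map_add, hσ3]
    abel
  let e : Module.Basis (Fin 2) ℤ L := (Module.finBasis ℤ L).reindex (finCongr hrk)
  set σ' : Module.End ℤ L := (σ : L →ₗ[ℤ] L) with hσ'
  have hcomp : (σ' * σ' + σ' + 1 : Module.End ℤ L) = 0 := by
    ext z
    simpa [hσ', Module.End.mul_apply] using hsum z
  set M : Matrix (Fin 2) (Fin 2) ℤ := LinearMap.toMatrixAlgEquiv e σ' with hMdef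
  have hM : M * M + M + 1 = 0 := by
    have := congrArg (LinearMap.toMatrixAlgEquiv e) hcomp
    simpa [map_add, map_mul, map_one] using this
  set a : ℤ := M 0 0 with ha
  set b' : ℤ := M 0 1 with hb'
  set c : ℤ := M 1 0 with hc
  set d : ℤ := M 1 1 with hd
  have hentry : ∀ i j : Fin 2, (M * M + M + 1) i j = (0 : Matrix (Fin 2) (Fin 2) ℤ) i j :=
    fun i j => by rw [hM]
  have E1 : a * a + b' * c + a + 1 = 0 := by
    have := hentry 0 0
    simpa [Matrix.mul_apply, Fin.sum_univ_two, Matrix.one_apply, ha, hb', hc, hd,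
      mul_comm] using this
  have E2 : a * b' + b' * d + b' = 0 := by
    have := hentry 0 1
    simpa [Matrix.mul_apply, Fin.sum_univ_two, Matrix.one_apply, ha, hb', hc, hd,
      mul_comm] using this
  have E3 : c * a + d * c + c = 0 := by
    have := hentry 1 0
    simpa [Matrix.mul_apply, Fin.sum_univ_two, Matrix.one_apply, ha, hb', hc, hd,
      mul_comm] using this
  have E4 : c * b' + d * d + d + 1 = 0 := by
    have := hentry 1 1
    simpa [Matrix.mul_apply, Fin.sum_univ_two, Matrix.one_apply, ha, hb', hc, hd,
      mul_comm] using this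
  have htr : a + d + 1 = 0 := by
    by_contra htr
    have hc0 : c = 0 := by
      rcases mul_eq_zero.mp (show c * (a + d + 1) = 0 by linear_combination E3) with h | h
      · exact h
      · exact absurd h htr
    have hb0 : b' = 0 := by
      rcases mul_eq_zero.mp (show b' * (a + d + 1) = 0 by linear_combination E2) with h | h
      · exact h
      · exact absurd h htr
    rw [hc0, hb0] at E1
    nlinarith [sq_nonneg (2*a+1)]
  have hdisc : (d - a)^2 - 4*c*(-b') = -3 := by nlinarith [E1, htr]
  obtain ⟨x, y, hxy⟩ := disc_neg_three_represents c.natAbs c (d - a) (-b') rfl hdisc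
  set v : L := e.equivFun.symm ![x, y] with hv
  have hvrepr : ∀ i, e.repr v i = ![x, y] i := by
    intro i
    have : e.equivFun v = ![x, y] := by rw [hv, LinearEquiv.apply_symm_apply]
    rw [← this, e.equivFun_apply]
  have hwrepr : ∀ i, e.repr (σ v) i = (M.mulVec ![x, y]) i := by
    intro i
    have h1 : M.mulVec (e.repr v) = e.repr (σ' v) := LinearMap.toMatrix_mulVec_repr e e σ' v
    have h2 : (e.repr v : Fin 2 → ℤ) = ![x, y] := funext hvrepr
    rw [← h2]
    exact (congrFun h1 i).symm
  set f : Fin 2 → L := ![v, σ v] with hf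
  have hdet : IsUnit (e.det f) := by
    rw [e.det_apply]
    have hMf : e.toMatrix f = !![x, a*x + b'*y; y, c*x + d*y] := by
      ext i j
      fin_cases i <;> fin_cases j <;>
        simp [Module.Basis.toMatrix_apply, hf, hvrepr, hwrepr, Matrix.mulVec, dotProduct,
          Fin.sum_univ_two, ha, hb', hc, hd]
    rw [hMf, Matrix.det_fin_two_of]
    rw [Int.isUnit_iff]
    rcases hxy with h | h
    · left; linear_combination h
    · right; linear_combination h
  obtain ⟨hli, hsp⟩ := (Module.Basis.is_basis_iff_det e).mpr hdet
  let bb : Module.Basis (Fin 2) ℤ L := Module.Basis.mk hli hsp.ge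
  have hb0 : bb 0 = v := by simp [bb, Module.Basis.coe_mk, hf]
  have hb1 : bb 1 = σ v := by simp [bb, Module.Basis.coe_mk, hf]
  have h3' : B v (σ (σ v)) = B v (σ v) := by
    rw [← hisom v (σ (σ v)), hσ3 v, hsymm]
  have h2 : B v (σ (σ v)) + B v (σ v) + B v v = 0 := by
    have := congrArg (fun z => B v z) (hsum v)
    simpa [map_add] using this
  refine ⟨bb, -(B v (σ v)), ?_, ?_, ?_⟩
  · rw [hb0]
    rw [h3'] at h2
    linarith
  · rw [hb1, hisom]
    rw [h3'] at h2
    linarith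
  · rw [hb0, hb1]; ring
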